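/- Suppose Δ_Δ ≥ 0. Then for every integer n ≥ 0: if h(x_Δ^−) ≤ 0, or if h(x_Δ^−) > 0 and n < n^−, then (−1)^n · W_n(x_Δ^−) > 0; if h(x_Δ^−) > 0 and n = n^−, then W_n(x_Δ^−) = 0; and if h(x_Δ^−) > 0 and n > n^−, then (−1)^{n+1} · W_n(x_Δ^−) > 0. Moreover, if a ≤ 2 then h(x_Δ^−) < 0 and h(x_Δ^+) < 0. -/

import Mathlib

open Polynomial

set_option maxHeartbeats 800000

/-- Sign of `W n` at `xΔ⁻` (assuming `ΔΔ ≥ 0`), and negativity of `h(xΔ±)` when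
`a ≤ 2`. Here `h(z) = (2 - a) z - b`, `A(z) = a z + b` and
`n⁻ = -A(xΔ⁻)/h(xΔ⁻)`. -/
theorem stmt_8 (a b c d : ℝ) (ha : 0 < a) (hb : 0 < b) (hc : 0 < c) (hd : 0 < d)
    (W : ℕ → Polynomial ℝ)
    (hW0 : W 0 = 1) (hW1 : W 1 = X)
    (hW : ∀ n : ℕ, W (n + 2) = (C a * X + C b) * W (n + 1) + (C c * X + C d) * W n)
    (DD : ℝ) (hDD : DD = -a ^ 2 * d + a * b * c + c ^ 2) (hDD0 : 0 ≤ DD)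
    (xdm xdp : ℝ)
    (hxdm : xdm = (-(a * b) - 2 * c - 2 * Real.sqrt DD) / a ^ 2)
    (hxdp : xdp = (-(a * b) - 2 * c + 2 * Real.sqrt DD) / a ^ 2)
    (nminus : ℝ) (hnminus : nminus = -(a * xdm + b) / ((2 - a) * xdm - b)) :
    (∀ n : ℕ,
      (((2 - a) * xdm - b ≤ 0 ∨ (0 < (2 - a) * xdm - b ∧ (n : ℝ) < nminus)) →
        0 < (-1 : ℝ) ^ n * (W n).eval xdm) ∧
      ((0 < (2 - a) * xdm - b ∧ (n : ℝ) = nminus) → (W n).eval xdm = 0) ∧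
      ((0 < (2 - a) * xdm - b ∧ nminus < (n : ℝ)) →
        0 < (-1 : ℝ) ^ (n + 1) * (W n).eval xdm)) ∧
    (a ≤ 2 → (2 - a) * xdm - b < 0 ∧ (2 - a) * xdp - b < 0) := by
  have hs2 : Real.sqrt DD ^ 2 = DD := Real.sq_sqrt hDD0
  have hs0 : 0 ≤ Real.sqrt DD := Real.sqrt_nonneg _
  set s := Real.sqrt DD with hsdef
  have ha2 : (0:ℝ) < a ^ 2 := by positivity
  set A := a * xdm + b with hAdef
  set h := (2 - a) * xdm - b with hhdef
  have hxm : a ^ 2 * xdm = -(a * b) - 2 * c - 2 * s := by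
    rw [hxdm]; field_simp
  have haA : a * A = -2 * c - 2 * s := by
    have e : a * A = a ^ 2 * xdm + a * b := by rw [hAdef]; ring
    rw [e, hxm]; ring
  have hAneg : A < 0 := by nlinarith [haA, hs0]
  have hAne : A ≠ 0 := ne_of_lt hAneg
  have h0 : a ^ 2 * (c * xdm + d) * 4 + (a * A) ^ 2 = 0 := by
    have e1 : a ^ 2 * (c * xdm + d) * 4 = 4 * c * (a ^ 2 * xdm) + 4 * a ^ 2 * d := by ring
    rw [e1, hxm, haA]
    linear_combination 4 * hs2 + 4 * hDD
  have hkey : c * xdm + d = -(A ^ 2) / 4 := by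
    have h4 : (a ^ 2 * 4 : ℝ) ≠ 0 := by positivity
    apply mul_left_cancel₀ h4
    linear_combination h0
  have form : ∀ n : ℕ, (W n).eval xdm = (A + n * h) / A * (A / 2) ^ n := by
    have key : ∀ n : ℕ, (W n).eval xdm = (A + n * h) / A * (A / 2) ^ n ∧
        (W (n + 1)).eval xdm = (A + (n + 1 : ℕ) * h) / A * (A / 2) ^ (n + 1) := by
      intro n
      induction n with
      | zero =>
        constructor
        · rw [hW0]; simp; field_simp
        · rw [hW1]; simp
          rw [hAdef, hhdef]
          have hA' : xdm * a + b ≠ 0 := by rw [mul_comm]; exact hAne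
          field_simp
          ring
      | succ n ih =>
        refine ⟨ih.2, ?_⟩
        rw [hW]
        simp only [eval_add, eval_mul, eval_C, eval_X]
        rw [ih.1, ih.2, hkey]
        have hAA : a * xdm + b = A := rfl
        rw [hAA]
        push_cast
        field_simp
        ring
    exact fun n => (key n).1
  constructor
  · intro n
    have hf := form n
    have hpowpos : 0 < (-(A / 2)) ^ n := pow_pos (by linarith) n
    have hnp : (-(A / 2)) ^ n = (-1 : ℝ) ^ n * (A / 2) ^ n := neg_pow _ _
    have hrw : ∀ q : ℝ, (-1 : ℝ) ^ n * (q * (A / 2) ^ n) = q * (-(A / 2)) ^ n := by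
      intro q; rw [hnp]; ring
    refine ⟨?_, ?_, ?_⟩
    · rintro (hh | ⟨hh, hn⟩)
      · have hnh : (n : ℝ) * h ≤ 0 :=
          mul_nonpos_of_nonneg_of_nonpos (Nat.cast_nonneg n) hh
        have hnum : A + n * h < 0 := by linarith
        have hq : 0 < (A + n * h) / A := div_pos_of_neg_of_neg hnum hAneg
        rw [hf, hrw]
        exact mul_pos hq hpowpos
      · rw [hnminus] at hn
        have hnh : (n : ℝ) * h < -A := (lt_div_iff₀ hh).mp hn
        have hnum : A + n * h < 0 := by linarith
        have hq : 0 < (A + n * h) / A := div_pos_of_neg_of_neg hnum hAneg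
        rw [hf, hrw]
        exact mul_pos hq hpowpos
    · rintro ⟨hh, hn⟩
      rw [hnminus] at hn
      have hnh : (n : ℝ) * h = -A := by
        field_simp at hn; linarith
      have hnum : A + n * h = 0 := by linarith
      rw [hf, hnum]
      simp
    · rintro ⟨hh, hn⟩
      rw [hnminus] at hn
      have hnh : -A < (n : ℝ) * h := (div_lt_iff₀ hh).mp hn
      have hnum : 0 < A + n * h := by linarith
      have hq : (A + n * h) / A < 0 := div_neg_of_pos_of_neg hnum hAneg
      have e : (-1 : ℝ) ^ (n + 1) * (W n).eval xdm
          = -((A + n * h) / A) * (-(A / 2)) ^ n := by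
        rw [hf, pow_succ, hnp]; ring
      rw [e]
      exact mul_pos (by linarith) hpowpos
  · intro hale
    have hsq : (2 * s) ^ 2 < (a * b + 2 * c) ^ 2 := by
      nlinarith [hs2, mul_pos (mul_pos ha ha) hd, sq_nonneg (a * b)]
    have hslt : 2 * s < a * b + 2 * c := by
      nlinarith [hsq, hs0, mul_pos ha hb]
    have hnum1 : -(a * b) - 2 * c - 2 * s < 0 := by nlinarith [mul_pos ha hb]
    have hnum2 : -(a * b) - 2 * c + 2 * s < 0 := by linarith
    have hxmneg : xdm < 0 := by
      rw [hxdm]; exact div_neg_of_neg_of_pos hnum1 ha2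
    have hxpneg : xdp < 0 := by
      rw [hxdp]; exact div_neg_of_neg_of_pos hnum2 ha2
    constructor
    · rw [hhdef]
      nlinarith [mul_nonneg (by linarith : (0:ℝ) ≤ 2 - a) (by linarith : (0:ℝ) ≤ -xdm)]
    · nlinarith [mul_nonneg (by linarith : (0:ℝ) ≤ 2 - a) (by linarith : (0:ℝ) ≤ -xdp)]
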